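/- Let h, L, k be natural numbers with 0 < k < min(h, L). The number of functions f from Fin h to Fin L having exactly k singleton fibers (i.e., exactly k elements of Fin L whose preimage under f has exactly one element) equals C(L,k)·C(h,k)·k!·G(L−k, h−k), where G(V,u) := V^u + ∑_{t=1}^{u} (−1)^t · (1/t!) · (∏_{j=0}^{t−1} (u−j)(V−j)) · (V−t)^{u−t}. Consequently, when h packets are each placed independently and uniformly at random into L slots, the probability ξ_{hk} that exactly k slots contain exactly one packet equals C(L,k)C(h,k)k!·G(L−k,h−k)/L^h. -/

import Mathlib

open Finset

/-- The inclusion–exclusion expression `G(V,u)` from the paper: the number of ways to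
place `u` balls into `V` bins so that no bin contains exactly one ball. -/
noncomputable def G (V u : ℕ) : ℝ :=
  (V : ℝ) ^ u +
    ∑ t ∈ Finset.Icc 1 u,
      (-1 : ℝ) ^ t * (1 / (Nat.factorial t : ℝ)) *
        (∏ j ∈ Finset.range t, (((u : ℝ) - (j : ℝ)) * ((V : ℝ) - (j : ℝ)))) *
        ((V : ℝ) - (t : ℝ)) ^ (u - t)

set_option linter.unusedSectionVars false
section Aux
open Finset

variable {α β : Type*} [Fintype α] [Fintype β] [DecidableEq α] [DecidableEq β]

/-- Functions whose preimage of `K` is exactly `A` split into a pair of functions. -/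
def splitEquiv (A : Finset α) (K : Finset β) :
    {f : α → β // ∀ i, f i ∈ K ↔ i ∈ A} ≃
      ({x : α // x ∈ A} → {y : β // y ∈ K}) × ({x : α // x ∉ A} → {y : β // y ∉ K}) where
  toFun f := (fun x => ⟨f.1 x.1, (f.2 x.1).mpr x.2⟩,
              fun x => ⟨f.1 x.1, fun hh => x.2 ((f.2 x.1).mp hh)⟩)
  invFun p := ⟨fun i => if h : i ∈ A then (p.1 ⟨i, h⟩).1 else (p.2 ⟨i, h⟩).1, by
    intro i
    by_cases h : i ∈ A
    · simp only [h, dif_pos, iff_true]; exact (p.1 ⟨i, h⟩).2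
    · simp only [h, dif_neg, iff_false]; exact (p.2 ⟨i, h⟩).2⟩
  left_inv f := by
    apply Subtype.ext; funext i; by_cases h : i ∈ A <;> simp [h]
  right_inv p := by
    refine Prod.ext ?_ ?_ <;> funext x <;> apply Subtype.ext <;>
      simp [x.2]

lemma fiber_card_fst (A : Finset α) (K : Finset β) (f : α → β)
    (hf : ∀ i, f i ∈ K ↔ i ∈ A) (l : β) (hl : l ∈ K) :
    (univ.filter fun i => f i = l).card =
      (univ.filter fun x : {x : α // x ∈ A} =>
        (splitEquiv A K ⟨f, hf⟩).1 x = ⟨l, hl⟩).card := by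
  refine Finset.card_bij (fun a ha => ⟨a, (hf a).mp ?_⟩) ?_ ?_ ?_
  · rw [(mem_filter.mp ha).2]; exact hl
  · intro a ha
    simp only [mem_filter, mem_univ, true_and]
    exact Subtype.ext (mem_filter.mp ha).2
  · intro a ha b hb hab
    simpa using congrArg Subtype.val hab
  · intro b hb
    simp only [mem_filter, mem_univ, true_and] at hb
    exact ⟨b.1, mem_filter.mpr ⟨mem_univ _, congrArg Subtype.val hb⟩, Subtype.ext rfl⟩

lemma fiber_card_snd (A : Finset α) (K : Finset β) (f : α → β)
    (hf : ∀ i, f i ∈ K ↔ i ∈ A) (l : β) (hl : l ∉ K) :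
    (univ.filter fun i => f i = l).card =
      (univ.filter fun x : {x : α // x ∉ A} =>
        (splitEquiv A K ⟨f, hf⟩).2 x = ⟨l, hl⟩).card := by
  refine Finset.card_bij (fun a ha => ⟨a, fun hA => hl ?_⟩) ?_ ?_ ?_
  · rw [← (mem_filter.mp ha).2]; exact (hf a).mpr hA
  · intro a ha
    simp only [mem_filter, mem_univ, true_and]
    exact Subtype.ext (mem_filter.mp ha).2
  · intro a ha b hb hab
    simpa using congrArg Subtype.val hab
  · intro b hb
    simp only [mem_filter, mem_univ, true_and] at hb
    exact ⟨b.1, mem_filter.mpr ⟨mem_univ _, congrArg Subtype.val hb⟩, Subtype.ext rfl⟩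

lemma card_split (A : Finset α) (K : Finset β) (q₁ q₂ : ℕ → Prop)
    [DecidablePred q₁] [DecidablePred q₂] :
    (univ.filter fun f : α → β =>
        (∀ i, f i ∈ K ↔ i ∈ A) ∧
        (∀ l ∈ K, q₁ (univ.filter fun i => f i = l).card) ∧
        (∀ l ∉ K, q₂ (univ.filter fun i => f i = l).card)).card =
      (univ.filter fun g : {x : α // x ∈ A} → {y : β // y ∈ K} =>
          ∀ y, q₁ (univ.filter fun x => g x = y).card).card *
      (univ.filter fun g : {x : α // x ∉ A} → {y : β // y ∉ K} =>
          ∀ y, q₂ (univ.filter fun x => g x = y).card).card := by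
  rw [← Fintype.card_subtype, ← Fintype.card_subtype, ← Fintype.card_subtype,
    ← Fintype.card_prod]
  refine Fintype.card_congr ?_
  refine ((Equiv.subtypeSubtypeEquivSubtypeInter _ _).symm.trans ?_).trans
    Equiv.subtypeProdEquivProd
  refine (splitEquiv A K).subtypeEquiv ?_
  rintro ⟨f, hf⟩
  constructor
  · rintro ⟨h1, h2⟩
    constructor
    · rintro ⟨l, hl⟩
      rw [← fiber_card_fst A K f hf l hl]; exact h1 l hl
    · rintro ⟨l, hl⟩
      rw [← fiber_card_snd A K f hf l hl]; exact h2 l hl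
  · rintro ⟨h1, h2⟩
    constructor
    · intro l hl; rw [fiber_card_fst A K f hf l hl]; exact h1 ⟨l, hl⟩
    · intro l hl; rw [fiber_card_snd A K f hf l hl]; exact h2 ⟨l, hl⟩

section P2
variable {γ δ : Type*} [Fintype γ] [Fintype δ] [DecidableEq γ] [DecidableEq δ]

lemma allfib_one_iff_bijective (g : γ → δ) :
    (∀ y, (univ.filter fun x => g x = y).card = 1) ↔ Function.Bijective g := by
  rw [Function.bijective_iff_existsUnique]
  constructor
  · intro H b
    obtain ⟨a, ha⟩ := Finset.card_eq_one.mp (H b)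
    have haa : a ∈ univ.filter fun x => g x = b := ha ▸ mem_singleton_self a
    refine ⟨a, (mem_filter.mp haa).2, fun y hy => ?_⟩
    have hy' : y ∈ univ.filter fun x => g x = b := mem_filter.mpr ⟨mem_univ y, hy⟩
    rw [ha, mem_singleton] at hy'; exact hy'
  · intro H y
    obtain ⟨a, ha, hu⟩ := H y
    rw [Finset.card_eq_one]
    refine ⟨a, ?_⟩
    ext z
    simp only [mem_filter, mem_univ, true_and, mem_singleton]
    exact ⟨fun hz => hu z hz, fun hz => hz ▸ ha⟩

lemma card_allfib_one (hcard : Fintype.card γ = Fintype.card δ) :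
    (univ.filter fun g : γ → δ =>
      ∀ y, (univ.filter fun x => g x = y).card = 1).card = Nat.factorial (Fintype.card γ) := by
  classical
  rw [Finset.filter_congr (fun g _ => by
    rw [allfib_one_iff_bijective g] : ∀ g ∈ univ, _ ↔ Function.Bijective g)]
  rw [← Fintype.card_subtype]
  rw [Fintype.card_congr
    (⟨fun g => Equiv.ofBijective g.1 g.2, fun e => ⟨e, e.bijective⟩,
      fun g => Subtype.ext rfl, fun e => Equiv.ext fun x => rfl⟩ :
      {g : γ → δ // Function.Bijective g} ≃ (γ ≃ δ))]
  exact Fintype.card_equiv (Fintype.equivOfCardEq hcard)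
end P2
section P3
variable {α β : Type*} [Fintype α] [Fintype β] [DecidableEq α] [DecidableEq β]

lemma card_forall_mem_fiber_one (T : Finset β) :
    (univ.filter fun f : α → β =>
        ∀ l ∈ T, (univ.filter fun i => f i = l).card = 1).card =
      (Fintype.card α).descFactorial T.card *
        (Fintype.card β - T.card) ^ (Fintype.card α - T.card) := by
  classical
  have hmap : ∀ f ∈ (univ.filter fun f : α → β =>
      ∀ l ∈ T, (univ.filter fun i => f i = l).card = 1),
      (univ.filter fun i => f i ∈ T) ∈ powersetCard T.card (univ : Finset α) := by
    intro f hf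
    rw [mem_powersetCard]
    refine ⟨subset_univ _, ?_⟩
    have hrw : (univ.filter fun i => f i ∈ T) =
        T.biUnion (fun l => univ.filter fun i => f i = l) := by
      ext i
      simp only [mem_filter, mem_univ, true_and, mem_biUnion]
      exact ⟨fun h => ⟨f i, h, rfl⟩, fun ⟨l, hl, he⟩ => he ▸ hl⟩
    rw [hrw, card_biUnion]
    · rw [Finset.sum_congr rfl (fun l hl => (mem_filter.mp hf).2 l hl)]
      simp
    · intro x hx y hy hxy
      rw [Function.onFun, Finset.disjoint_left]
      intro a ha ha'
      exact hxy ((mem_filter.mp ha).2 ▸ (mem_filter.mp ha').2 ▸ rfl)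
  rw [Finset.card_eq_sum_card_fiberwise hmap]
  have hterm : ∀ A ∈ powersetCard T.card (univ : Finset α),
      ((univ.filter fun f : α → β =>
          ∀ l ∈ T, (univ.filter fun i => f i = l).card = 1).filter
        (fun f => (univ.filter fun i => f i ∈ T) = A)).card =
      Nat.factorial T.card * (Fintype.card β - T.card) ^ (Fintype.card α - T.card) := by
    intro A hA
    obtain ⟨-, hAcard⟩ := mem_powersetCard.mp hA
    rw [filter_filter]
    have hcongr : (univ.filter fun f : α → β =>
        (∀ l ∈ T, (univ.filter fun i => f i = l).card = 1) ∧
          (univ.filter fun i => f i ∈ T) = A) =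
        (univ.filter fun f : α → β =>
          (∀ i, f i ∈ T ↔ i ∈ A) ∧
          (∀ l ∈ T, (fun n => n = 1) (univ.filter fun i => f i = l).card) ∧
          (∀ l ∉ T, (fun _ => True) (univ.filter fun i => f i = l).card)) := by
      apply Finset.filter_congr
      intro f _
      constructor
      · rintro ⟨h1, h2⟩
        refine ⟨fun i => ?_, h1, fun _ _ => trivial⟩
        rw [← h2]; simp
      · rintro ⟨h1, h2, -⟩
        refine ⟨h2, ?_⟩
        ext i; simp [h1 i]
    rw [hcongr, card_split A T (fun n => n = 1) (fun _ => True)]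
    have c1 : (univ.filter fun g : {x : α // x ∈ A} → {y : β // y ∈ T} =>
        ∀ y, (univ.filter fun x => g x = y).card = 1).card = Nat.factorial T.card := by
      rw [card_allfib_one (by simp [hAcard])]
      simp [hAcard]
    have c2 : (univ.filter fun g : {x : α // x ∉ A} → {y : β // y ∉ T} =>
        ∀ y, (fun _ : ℕ => True) (univ.filter fun x => g x = y).card).card =
        (Fintype.card β - T.card) ^ (Fintype.card α - T.card) := by
      rw [Finset.filter_true_of_mem (fun _ _ => fun _ => trivial)]
      rw [Finset.card_univ, Fintype.card_fun]
      have d1 : Fintype.card {x : α // x ∉ A} = Fintype.card α - T.card := by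
        rw [Fintype.card_subtype_compl]
        simp [hAcard]
      have d2 : Fintype.card {y : β // y ∉ T} = Fintype.card β - T.card := by
        rw [Fintype.card_subtype_compl]
        simp
      rw [d1, d2]
    rw [c1, c2]
  rw [Finset.sum_congr rfl hterm, Finset.sum_const, Finset.card_powersetCard,
    Finset.card_univ, smul_eq_mul, Nat.descFactorial_eq_factorial_mul_choose]
  ring
end P3
end Aux

lemma real_alternating_sum_range_choose (n : ℕ) :
    ∑ i ∈ range (n + 1), (-1 : ℝ) ^ i * (n.choose i : ℝ) =
      if n = 0 then 1 else 0 := by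
  have h := Int.alternating_sum_range_choose (n := n)
  have : ((∑ i ∈ range (n + 1), (-1 : ℤ) ^ i * (n.choose i : ℤ) : ℤ) : ℝ) =
      ∑ i ∈ range (n + 1), (-1 : ℝ) ^ i * (n.choose i : ℝ) := by
    push_cast; exact Finset.sum_congr rfl fun x _ => by ring
  rw [← this, h]
  split <;> norm_num

lemma alt_sum_choose_choose (s k : ℕ) :
    ∑ m ∈ range (s + 1), (-1 : ℝ) ^ m * (s.choose m : ℝ) * (m.choose k : ℝ) =
      (-1 : ℝ) ^ k * (if s = k then 1 else 0) := by
  by_cases hks : k ≤ s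
  · have hsub : Finset.Ico k (s + 1) ⊆ range (s + 1) := by
      intro m hm; rw [mem_range]; exact (mem_Ico.mp hm).2
    rw [← Finset.sum_subset hsub (fun m hm hm' => ?_)]
    swap
    · have : m < k := by
        rw [mem_Ico, not_and_or] at hm'
        rcases hm' with h | h
        · omega
        · exact absurd (mem_range.mp hm) h
      simp [Nat.choose_eq_zero_of_lt this]
    rw [Finset.sum_Ico_eq_sum_range]
    have hrange : s + 1 - k = s - k + 1 := by omega
    rw [hrange]
    have hterm : ∀ r ∈ range (s - k + 1),
        (-1 : ℝ) ^ (k + r) * (s.choose (k + r) : ℝ) * ((k + r).choose k : ℝ) =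
        ((-1 : ℝ) ^ k * (s.choose k : ℝ)) * ((-1 : ℝ) ^ r * ((s - k).choose r : ℝ)) := by
      intro r hr
      have hkr : k + r ≤ s := by
        have := mem_range.mp hr; omega
      have := Nat.choose_mul (n := s) (k := k + r) (s := k) (Nat.le_add_right k r)
      rw [Nat.add_sub_cancel_left] at this
      have hcast : (s.choose (k + r) : ℝ) * ((k + r).choose k : ℝ) =
          (s.choose k : ℝ) * ((s - k).choose r : ℝ) := by exact_mod_cast congrArg Nat.cast this
      rw [pow_add]
      calc (-1:ℝ) ^ k * (-1) ^ r * (s.choose (k + r) : ℝ) * ((k + r).choose k : ℝ)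
          = (-1:ℝ) ^ k * (-1) ^ r * ((s.choose (k + r) : ℝ) * ((k + r).choose k : ℝ)) := by ring
        _ = (-1:ℝ) ^ k * (-1) ^ r * ((s.choose k : ℝ) * ((s - k).choose r : ℝ)) := by rw [hcast]
        _ = (-1:ℝ) ^ k * (s.choose k : ℝ) * ((-1) ^ r * ((s - k).choose r : ℝ)) := by ring
    rw [Finset.sum_congr rfl hterm, ← Finset.mul_sum, real_alternating_sum_range_choose]
    by_cases hsk : s = k
    · simp [hsk]
    · have : s - k ≠ 0 := by omega
      simp [this, hsk]
  · have : ∀ m ∈ range (s + 1), (-1 : ℝ) ^ m * (s.choose m : ℝ) * (m.choose k : ℝ) = 0 := by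
      intro m hm
      have : m < k := by have := mem_range.mp hm; omega
      simp [Nat.choose_eq_zero_of_lt this]
    rw [Finset.sum_congr rfl this, Finset.sum_const, smul_zero]
    have : s ≠ k := by omega
    simp [this]

lemma descFactorial_add_eq (n k : ℕ) :
    ∀ s : ℕ, n.descFactorial (k + s) = n.descFactorial k * (n - k).descFactorial s
  | 0 => by simp
  | s + 1 => by
    rw [← Nat.add_assoc, Nat.descFactorial_succ, descFactorial_add_eq n k s,
      Nat.descFactorial_succ, ← Nat.sub_sub]
    ring

/-- the `t`-th inclusion–exclusion term in closed (cast) form. -/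
noncomputable def cterm (V u t : ℕ) : ℝ :=
  (-1 : ℝ) ^ t * (V.choose t : ℝ) * (u.descFactorial t : ℝ) * ((V - t : ℕ) : ℝ) ^ (u - t)

lemma gterm_eq (V u t : ℕ) :
    (-1 : ℝ) ^ t * (1 / (Nat.factorial t : ℝ)) *
        (∏ j ∈ Finset.range t, (((u : ℝ) - (j : ℝ)) * ((V : ℝ) - (j : ℝ)))) *
        ((V : ℝ) - (t : ℝ)) ^ (u - t) = cterm V u t := by
  unfold cterm
  by_cases hu : t ≤ u
  · by_cases hV : t ≤ V
    · have hprod : (∏ j ∈ Finset.range t, (((u : ℝ) - (j : ℝ)) * ((V : ℝ) - (j : ℝ)))) =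
          (u.descFactorial t : ℝ) * (V.descFactorial t : ℝ) := by
        rw [Nat.descFactorial_eq_prod_range, Nat.descFactorial_eq_prod_range]
        push_cast
        rw [← Finset.prod_mul_distrib]
        refine Finset.prod_congr rfl fun j hj => ?_
        have hj' := Finset.mem_range.mp hj
        rw [Nat.cast_sub (by omega), Nat.cast_sub (by omega)]
      have hVt : ((V : ℝ) - (t : ℝ)) = ((V - t : ℕ) : ℝ) := by
        rw [Nat.cast_sub hV]
      have hdf : (V.descFactorial t : ℝ) = (Nat.factorial t : ℝ) * (V.choose t : ℝ) := by
        exact_mod_cast congrArg Nat.cast (Nat.descFactorial_eq_factorial_mul_choose V t)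
      rw [hprod, hVt, hdf]
      have hfac : (Nat.factorial t : ℝ) ≠ 0 := by
        exact_mod_cast Nat.factorial_ne_zero t
      field_simp
    · -- t > V : both sides vanish
      have hzero : (∏ j ∈ Finset.range t, (((u : ℝ) - (j : ℝ)) * ((V : ℝ) - (j : ℝ)))) = 0 := by
        apply Finset.prod_eq_zero (Finset.mem_range.mpr (by omega : V < t))
        simp
      rw [hzero, Nat.choose_eq_zero_of_lt (by omega)]
      simp
  · -- t > u : both sides vanish
    have hzero : (∏ j ∈ Finset.range t, (((u : ℝ) - (j : ℝ)) * ((V : ℝ) - (j : ℝ)))) = 0 := by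
      apply Finset.prod_eq_zero (Finset.mem_range.mpr (by omega : u < t))
      simp
    rw [hzero, Nat.descFactorial_of_lt (by omega)]
    simp

lemma G_eq_sum (V u : ℕ) : G V u = ∑ t ∈ range (u + 1), cterm V u t := by
  have hins : range (u + 1) = insert 0 (Finset.Icc 1 u) := by
    ext t; simp only [mem_range, mem_insert, mem_Icc]; omega
  rw [hins, Finset.sum_insert (by simp)]
  unfold G
  rw [Finset.sum_congr rfl (fun t _ => gterm_eq V u t)]
  congr 1
  unfold cterm
  simp

lemma sum_cterm_ext {V u N : ℕ} (hN : min V u < N) :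
    ∑ t ∈ range N, cterm V u t = ∑ t ∈ range (min V u + 1), cterm V u t := by
  refine (Finset.sum_subset (by intro t ht; rw [mem_range] at *; omega) ?_).symm
  intro t ht ht'
  have : min V u < t := by
    rw [mem_range] at ht ht'; omega
  unfold cterm
  rcases Nat.lt_or_ge V t with hV | hV
  · rw [Nat.choose_eq_zero_of_lt hV]; simp
  · have : u < t := by omega
    rw [Nat.descFactorial_of_lt this]; simp


/-- for `0 < k < min h L`, the number of functions `f : Fin h → Fin L` with
exactly `k` singleton fibers equals `C(L,k) C(h,k) k! G(L-k, h-k)`; consequently the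
probability `ξ_{hk}` that exactly `k` slots contain exactly one packet equals
`C(L,k) C(h,k) k! G(L-k, h-k) / L^h`. -/
theorem card_exactly_k_singleton_fibers (h L k : ℕ) (hk : 0 < k) (hk' : k < min h L) :
    (((univ.filter fun f : Fin h → Fin L =>
          (univ.filter fun l : Fin L =>
              (univ.filter fun i : Fin h => f i = l).card = 1).card = k).card : ℝ)
        = (L.choose k : ℝ) * (h.choose k : ℝ) * (Nat.factorial k : ℝ) * G (L - k) (h - k))
    ∧
    (((univ.filter fun f : Fin h → Fin L =>
          (univ.filter fun l : Fin L =>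
              (univ.filter fun i : Fin h => f i = l).card = 1).card = k).card : ℝ) / (L : ℝ) ^ h
        = (L.choose k : ℝ) * (h.choose k : ℝ) * (Nat.factorial k : ℝ) * G (L - k) (h - k)
            / (L : ℝ) ^ h) := by
  classical
  have hkh : k < h := (lt_min_iff.mp hk').1
  have hkL : k < L := (lt_min_iff.mp hk').2
  have hmain : (((univ.filter fun f : Fin h → Fin L =>
          (univ.filter fun l : Fin L =>
              (univ.filter fun i : Fin h => f i = l).card = 1).card = k).card : ℝ)
        = (L.choose k : ℝ) * (h.choose k : ℝ) * (Nat.factorial k : ℝ) * G (L - k) (h - k)) := by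
    -- the count B(T) of functions making every bin of `T` a singleton
    have hB : ∀ T : Finset (Fin L),
        ((univ.filter fun f : Fin h → Fin L =>
          T ⊆ univ.filter fun l : Fin L =>
            (univ.filter fun i : Fin h => f i = l).card = 1).card : ℕ)
        = h.descFactorial T.card * (L - T.card) ^ (h - T.card) := by
      intro T
      have hcg : (univ.filter fun f : Fin h → Fin L =>
          T ⊆ univ.filter fun l : Fin L =>
            (univ.filter fun i : Fin h => f i = l).card = 1) =
          (univ.filter fun f : Fin h → Fin L =>
            ∀ l ∈ T, (univ.filter fun i : Fin h => f i = l).card = 1) := by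
        apply Finset.filter_congr
        intro f _
        constructor
        · intro hs l hl; exact (mem_filter.mp (hs hl)).2
        · intro hs l hl; exact mem_filter.mpr ⟨mem_univ _, hs l hl⟩
      rw [hcg]
      have := card_forall_mem_fiber_one (α := Fin h) (β := Fin L) T
      simp only [Fintype.card_fin] at this
      refine Eq.trans ?_ this
      congr!
    -- step 1 : count as a sum of indicators
    have step1 : (((univ.filter fun f : Fin h → Fin L =>
          (univ.filter fun l : Fin L =>
              (univ.filter fun i : Fin h => f i = l).card = 1).card = k).card : ℝ)) =
        ∑ f : Fin h → Fin L,
          (if (univ.filter fun l : Fin L =>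
              (univ.filter fun i : Fin h => f i = l).card = 1).card = k then (1:ℝ) else 0) := by
      rw [Finset.card_filter]
      push_cast [apply_ite (Nat.cast : ℕ → ℝ)]
      rfl
    -- step 2 : indicator as an alternating powerset sum
    have step2 : ∀ f : Fin h → Fin L,
        (if (univ.filter fun l : Fin L =>
            (univ.filter fun i : Fin h => f i = l).card = 1).card = k then (1:ℝ) else 0) =
        (-1:ℝ)^k * ∑ T ∈ (univ.filter fun l : Fin L =>
            (univ.filter fun i : Fin h => f i = l).card = 1).powerset,
          (-1:ℝ)^T.card * (T.card.choose k : ℝ) := by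
      intro f
      have key := Finset.sum_powerset_apply_card
        (f := fun m => (-1:ℝ)^m * (m.choose k : ℝ))
        (x := univ.filter fun l : Fin L =>
            (univ.filter fun i : Fin h => f i = l).card = 1)
      rw [key]
      set s := (univ.filter fun l : Fin L =>
            (univ.filter fun i : Fin h => f i = l).card = 1).card with hs
      have : ∑ m ∈ range (s + 1), s.choose m • ((-1:ℝ)^m * (m.choose k : ℝ)) =
          ∑ m ∈ range (s + 1), (-1:ℝ)^m * (s.choose m : ℝ) * (m.choose k : ℝ) := by
        refine Finset.sum_congr rfl fun m _ => ?_
        rw [nsmul_eq_mul]; ring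
      rw [this, alt_sum_choose_choose]
      rcases eq_or_ne s k with he | he
      · simp [he, ← pow_add, ← two_mul]
      · simp [he]
    rw [step1, Finset.sum_congr rfl (fun f _ => step2 f), ← Finset.mul_sum]
    -- step 3 : extend every powerset sum to the full powerset, then swap
    have step3 : ∀ f : Fin h → Fin L,
        (∑ T ∈ (univ.filter fun l : Fin L =>
            (univ.filter fun i : Fin h => f i = l).card = 1).powerset,
          (-1:ℝ)^T.card * (T.card.choose k : ℝ)) =
        ∑ T ∈ (univ : Finset (Fin L)).powerset,
          (if T ⊆ (univ.filter fun l : Fin L =>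
              (univ.filter fun i : Fin h => f i = l).card = 1)
            then (-1:ℝ)^T.card * (T.card.choose k : ℝ) else 0) := by
      intro f
      rw [← Finset.sum_filter]
      congr 1
      ext T
      simp [Finset.mem_powerset]
    rw [Finset.sum_congr rfl (fun f _ => step3 f), Finset.sum_comm]
    -- step 4 : inner sums become cardinalities
    have step4 : ∀ T : Finset (Fin L),
        (∑ f : Fin h → Fin L,
          (if T ⊆ (univ.filter fun l : Fin L =>
              (univ.filter fun i : Fin h => f i = l).card = 1)
            then (-1:ℝ)^T.card * (T.card.choose k : ℝ) else 0)) =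
        ((-1:ℝ)^T.card * (T.card.choose k : ℝ)) *
          ((h.descFactorial T.card * (L - T.card) ^ (h - T.card) : ℕ) : ℝ) := by
      intro T
      rw [← Finset.sum_filter, Finset.sum_const, ← hB T, nsmul_eq_mul, mul_comm]
    rw [Finset.sum_congr rfl (fun T _ => step4 T)]
    -- step 5 : group by cardinality
    have step5 := Finset.sum_powerset_apply_card
      (f := fun t => ((-1:ℝ)^t * (t.choose k : ℝ)) *
          ((h.descFactorial t * (L - t) ^ (h - t) : ℕ) : ℝ))
      (x := (univ : Finset (Fin L)))
    rw [step5, Finset.card_univ, Fintype.card_fin]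
    -- step 6 : restrict to t ≥ k and reindex
    have hzero : ∀ t ∈ range (L + 1), t ∉ Finset.Ico k (L + 1) →
        L.choose t • (((-1:ℝ)^t * (t.choose k : ℝ)) *
          ((h.descFactorial t * (L - t) ^ (h - t) : ℕ) : ℝ)) = 0 := by
      intro t ht ht'
      have : t < k := by
        rw [mem_range] at ht; rw [mem_Ico, not_and_or] at ht'; omega
      rw [Nat.choose_eq_zero_of_lt this]
      simp
    rw [← Finset.sum_subset (by intro t ht; rw [mem_Ico] at ht; rw [mem_range]; omega) hzero]
    rw [Finset.sum_Ico_eq_sum_range]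
    have hrange : L + 1 - k = L - k + 1 := by omega
    rw [hrange, Finset.mul_sum]
    -- step 7 : termwise identification with cterm
    have step7 : ∀ s ∈ range (L - k + 1),
        (-1:ℝ)^k * (L.choose (k + s) •
          (((-1:ℝ)^(k+s) * ((k+s).choose k : ℝ)) *
          ((h.descFactorial (k+s) * (L - (k+s)) ^ (h - (k+s)) : ℕ) : ℝ))) =
        ((L.choose k : ℝ) * (h.choose k : ℝ) * (Nat.factorial k : ℝ)) *
          cterm (L - k) (h - k) s := by
      intro s hs
      have hsL : k + s ≤ L := by rw [mem_range] at hs; omega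
      have hch : L.choose (k + s) * (k + s).choose k = L.choose k * (L - k).choose s := by
        have := Nat.choose_mul (n := L) (k := k + s) (s := k) (Nat.le_add_right k s)
        rwa [Nat.add_sub_cancel_left] at this
      have hdf : h.descFactorial (k + s) =
          (Nat.factorial k * h.choose k) * (h - k).descFactorial s := by
        rw [descFactorial_add_eq, Nat.descFactorial_eq_factorial_mul_choose]
      have hsub1 : L - (k + s) = L - k - s := by omega
      have hsub2 : h - (k + s) = h - k - s := by omega
      unfold cterm
      rw [nsmul_eq_mul, hdf, hsub1, hsub2]
      have hsign : (-1:ℝ)^k * (-1:ℝ)^(k+s) = (-1:ℝ)^s := by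
        rw [← pow_add]
        have : k + (k + s) = 2 * k + s := by ring
        rw [this, pow_add, pow_mul]
        norm_num
      have hcast : (L.choose (k+s) : ℝ) * ((k+s).choose k : ℝ) =
          (L.choose k : ℝ) * ((L - k).choose s : ℝ) := by exact_mod_cast congrArg Nat.cast hch
      have hcomb : (-1:ℝ)^k * ((L.choose (k+s) : ℝ) * ((-1:ℝ)^(k+s) * ((k+s).choose k : ℝ)))
          = (-1:ℝ)^s * ((L.choose k : ℝ) * ((L - k).choose s : ℝ)) := by
        calc (-1:ℝ)^k * ((L.choose (k+s) : ℝ) * ((-1:ℝ)^(k+s) * ((k+s).choose k : ℝ)))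
            = ((-1:ℝ)^k * (-1:ℝ)^(k+s)) * ((L.choose (k+s) : ℝ) * ((k+s).choose k : ℝ)) := by
              ring
          _ = (-1:ℝ)^s * ((L.choose k : ℝ) * ((L - k).choose s : ℝ)) := by rw [hsign, hcast]
      push_cast
      linear_combination ((Nat.factorial k : ℝ) * (h.choose k : ℝ) *
        ((h - k).descFactorial s : ℝ) * ((L - k - s : ℕ) : ℝ) ^ (h - k - s)) * hcomb
    rw [Finset.sum_congr rfl step7, ← Finset.mul_sum]
    -- step 8 : recognize G
    have h8a : ∑ s ∈ range (L - k + 1), cterm (L - k) (h - k) s =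
        ∑ s ∈ range (min (L - k) (h - k) + 1), cterm (L - k) (h - k) s :=
      sum_cterm_ext (by omega)
    have h8b : ∑ s ∈ range (h - k + 1), cterm (L - k) (h - k) s =
        ∑ s ∈ range (min (L - k) (h - k) + 1), cterm (L - k) (h - k) s :=
      sum_cterm_ext (by omega)
    rw [h8a, ← h8b, ← G_eq_sum]
  exact ⟨hmain, by rw [hmain]⟩
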